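/- Let p₀, q₀, r₀ and p₁, q₁, r₁ be continuous with p₀, p₁ > 0. Suppose y₀ and y₁ are C¹ solutions on [t₁, t₂) of the Riccati equations y_j' + y_j²/p_j + (q_j/p_j)y_j + r_j = 0 (j = 0, 1). Then for j ∈ {0,1} and each t ∈ [t₁, t₂): y₁(t) − y₀(t) = (y₁(t₁) − y₀(t₁))·exp(−∫_{t₁}^t (y₀+y₁+q_{1−j})/p_{1−j} dτ) − ∫_{t₁}^t exp(−∫_τ^t (y₀+y₁+q_{1−j})/p_{1−j} ds)·[(1/p₁ − 1/p₀)·y_j² + (q₁/p₁ − q₀/p₀)·y_j + r₁ − r₀](τ) dτ. -/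

import Mathlib

open MeasureTheory Set intervalIntegral

lemma riccati_aux (t₁ t₂ : ℝ) (a g w w' : ℝ → ℝ)
    (haC : ContinuousOn a (Set.Ico t₁ t₂))
    (hgC : ContinuousOn g (Set.Ico t₁ t₂))
    (hw : ∀ x ∈ Set.Ico t₁ t₂, HasDerivAt w (w' x) x)
    (hodew : ∀ x ∈ Set.Ico t₁ t₂, w' x = -(a x * w x) - g x) :
    ∀ t ∈ Set.Ico t₁ t₂,
      w t = w t₁ * Real.exp (-∫ τ in t₁..t, a τ)
        - ∫ τ in t₁..t, Real.exp (-∫ s in τ..t, a s) * g τ := by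
  rintro t ⟨ht1, ht2⟩
  have hsub : Set.Icc t₁ t ⊆ Set.Ico t₁ t₂ := fun x hx => ⟨hx.1, lt_of_le_of_lt hx.2 ht2⟩
  have hsubo : Set.Ioo t₁ t ⊆ Set.Ioo t₁ t₂ := fun x hx => ⟨hx.1, hx.2.trans ht2⟩
  have haI : ContinuousOn a (Set.Icc t₁ t) := haC.mono hsub
  have hgI : ContinuousOn g (Set.Icc t₁ t) := hgC.mono hsub
  set A : ℝ → ℝ := fun s => ∫ x in t₁..s, a x with hA
  have haInt : ∀ u v, u ∈ Set.Icc t₁ t → v ∈ Set.Icc t₁ t →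
      IntervalIntegrable a volume u v := by
    intro u v hu hv
    apply ContinuousOn.intervalIntegrable
    apply haI.mono
    rw [show Set.Icc t₁ t = Set.uIcc t₁ t from (Set.uIcc_of_le ht1).symm]
    exact Set.uIcc_subset_uIcc (by rwa [Set.uIcc_of_le ht1]) (by rwa [Set.uIcc_of_le ht1])
  have hAcont : ContinuousOn A (Set.Icc t₁ t) := by
    have h := intervalIntegral.continuousOn_primitive_interval
      (f := a) (a := t₁) (b := t) (μ := volume) ?_
    · rwa [Set.uIcc_of_le ht1] at h
    · rw [Set.uIcc_of_le ht1]; exact haI.integrableOn_Icc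
  have haOpen : ContinuousOn a (Set.Ioo t₁ t₂) := haC.mono Set.Ioo_subset_Ico_self
  have hAderiv : ∀ x ∈ Set.Ioo t₁ t, HasDerivAt A (a x) x := by
    intro x hx
    have hxo : x ∈ Set.Ioo t₁ t₂ := hsubo hx
    refine intervalIntegral.integral_hasDerivAt_right
      (haInt t₁ x ⟨le_refl _, ht1⟩ ⟨hx.1.le, hx.2.le⟩)
      (haOpen.stronglyMeasurableAtFilter isOpen_Ioo x hxo) ?_
    exact (haC x ⟨hxo.1.le, hxo.2⟩).continuousAt
      (mem_nhds_iff.2 ⟨Set.Ioo t₁ t₂, Set.Ioo_subset_Ico_self, isOpen_Ioo, hxo⟩)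
  have hwc : ContinuousOn w (Set.Icc t₁ t) :=
    fun x hx => (hw x (hsub hx)).continuousAt.continuousWithinAt
  have hucont : ContinuousOn (fun s => w s * Real.exp (A s)) (Set.Icc t₁ t) :=
    hwc.mul (Real.continuous_exp.comp_continuousOn hAcont)
  have huderiv : ∀ x ∈ Set.Ioo t₁ t,
      HasDerivAt (fun s => w s * Real.exp (A s)) (-(g x * Real.exp (A x))) x := by
    intro x hx
    have h1 := hw x (hsub (Set.Ioo_subset_Icc_self hx))
    have h2 := (hAderiv x hx).exp
    have h3 := h1.mul h2
    refine h3.congr_deriv ?_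
    rw [hodew x (hsub (Set.Ioo_subset_Icc_self hx))]
    ring
  have hint : IntervalIntegrable (fun x => -(g x * Real.exp (A x))) volume t₁ t := by
    apply ContinuousOn.intervalIntegrable
    rw [Set.uIcc_of_le ht1]
    exact (hgI.mul (Real.continuous_exp.comp_continuousOn hAcont)).neg
  have key := intervalIntegral.integral_eq_sub_of_hasDeriv_right_of_le ht1 hucont
    (fun x hx => (huderiv x hx).hasDerivWithinAt) hint
  have hA0 : A t₁ = 0 := intervalIntegral.integral_same
  rw [intervalIntegral.integral_neg] at key
  have hI : (∫ x in t₁..t, g x * Real.exp (A x)) = w t₁ - w t * Real.exp (A t) := by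
    rw [hA0, Real.exp_zero, mul_one] at key; linarith
  have hsplit : ∀ τ ∈ Set.Icc t₁ t, (∫ s in τ..t, a s) = A t - A τ := by
    intro τ hτ
    have h := intervalIntegral.integral_add_adjacent_intervals
      (haInt t₁ τ ⟨le_refl _, ht1⟩ hτ) (haInt τ t hτ ⟨ht1, le_refl _⟩)
    simp only [hA]
    linarith [h]
  have hcong : (∫ τ in t₁..t, Real.exp (-∫ s in τ..t, a s) * g τ)
      = ∫ τ in t₁..t, Real.exp (-(A t)) * (g τ * Real.exp (A τ)) := by
    apply intervalIntegral.integral_congr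
    intro τ hτ
    rw [Set.uIcc_of_le ht1] at hτ
    show Real.exp (-∫ s in τ..t, a s) * g τ = Real.exp (-(A t)) * (g τ * Real.exp (A τ))
    rw [hsplit τ hτ, neg_sub, sub_eq_add_neg, Real.exp_add]
    ring
  rw [hcong, intervalIntegral.integral_const_mul, hI, Real.exp_neg]
  have hE : Real.exp (A t) ≠ 0 := (Real.exp_pos _).ne'
  field_simp
  have hAt : Real.exp (A t) = Real.exp (∫ τ in t₁..t, a τ) := rfl
  rw [hAt]
  ring

/-- Formula (2.12ⱼ): difference of two Riccati solutions. -/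
theorem stmt_7 (t₁ t₂ : ℝ) (ht : t₁ < t₂) (p q r y y' : Fin 2 → ℝ → ℝ)
    (hp : ∀ j, ContinuousOn (p j) (Set.Ico t₁ t₂))
    (hq : ∀ j, ContinuousOn (q j) (Set.Ico t₁ t₂))
    (hr : ∀ j, ContinuousOn (r j) (Set.Ico t₁ t₂))
    (hppos : ∀ j, ∀ t ∈ Set.Ico t₁ t₂, 0 < p j t)
    (hy : ∀ j, ∀ t ∈ Set.Ico t₁ t₂, HasDerivAt (y j) (y' j t) t)
    (hy'c : ∀ j, ContinuousOn (y' j) (Set.Ico t₁ t₂))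
    (hode : ∀ j, ∀ t ∈ Set.Ico t₁ t₂,
      y' j t + (y j t) ^ 2 / p j t + (q j t / p j t) * y j t + r j t = 0) :
    ∀ j : Fin 2, ∀ t ∈ Set.Ico t₁ t₂,
      y 1 t - y 0 t =
        (y 1 t₁ - y 0 t₁) *
          Real.exp (-∫ τ in t₁..t,
            (y 0 τ + y 1 τ + q (1 - j) τ) / p (1 - j) τ)
        - ∫ τ in t₁..t,
            Real.exp (-∫ s in τ..t,
              (y 0 s + y 1 s + q (1 - j) s) / p (1 - j) s) *
            ((1 / p 1 τ - 1 / p 0 τ) * (y j τ) ^ 2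
              + (q 1 τ / p 1 τ - q 0 τ / p 0 τ) * y j τ
              + r 1 τ - r 0 τ) := by
  have hyc : ∀ i : Fin 2, ContinuousOn (y i) (Set.Ico t₁ t₂) :=
    fun i x hx => ((hy i x hx).continuousAt).continuousWithinAt
  have hpne : ∀ i : Fin 2, ∀ x ∈ Set.Ico t₁ t₂, p i x ≠ 0 :=
    fun i x hx => (hppos i x hx).ne'
  have haC : ∀ i : Fin 2, ContinuousOn
      (fun s => (y 0 s + y 1 s + q i s) / p i s) (Set.Ico t₁ t₂) :=
    fun i => (((hyc 0).add (hyc 1)).add (hq i)).div (hp i) (hpne i)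
  have hgC : ∀ i : Fin 2, ContinuousOn
      (fun s => (1 / p 1 s - 1 / p 0 s) * (y i s) ^ 2
        + (q 1 s / p 1 s - q 0 s / p 0 s) * y i s + r 1 s - r 0 s)
      (Set.Ico t₁ t₂) := by
    intro i
    apply ContinuousOn.sub _ (hr 0)
    apply ContinuousOn.add _ (hr 1)
    apply ContinuousOn.add
    · exact ((continuousOn_const.div (hp 1) (hpne 1)).sub
        (continuousOn_const.div (hp 0) (hpne 0))).mul ((hyc i).pow 2)
    · exact (((hq 1).div (hp 1) (hpne 1)).sub
        ((hq 0).div (hp 0) (hpne 0))).mul (hyc i)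
  have hw : ∀ x ∈ Set.Ico t₁ t₂,
      HasDerivAt (fun s => y 1 s - y 0 s) (y' 1 x - y' 0 x) x :=
    fun x hx => (hy 1 x hx).sub (hy 0 x hx)
  have hderivs : ∀ i : Fin 2, ∀ x ∈ Set.Ico t₁ t₂,
      y' i x = -((y i x) ^ 2 / p i x + q i x / p i x * y i x + r i x) := by
    intro i x hx
    have h := hode i x hx
    linarith
  intro j
  fin_cases j
  · -- j = 0
    have h1 : (1 - 0 : Fin 2) = 1 := by decide
    simp only [Fin.zero_eta, Fin.isValue, h1]
    refine riccati_aux t₁ t₂ _ _ _ (fun s => y' 1 s - y' 0 s) (haC 1) (hgC 0) hw ?_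
    intro x hx
    have e0 := hderivs 0 x hx
    have e1 := hderivs 1 x hx
    have hp0 := hpne 0 x hx
    have hp1 := hpne 1 x hx
    simp only [e0, e1]
    field_simp
    ring
  · -- j = 1
    have h1 : (1 - 1 : Fin 2) = 0 := by decide
    simp only [Fin.mk_one, Fin.isValue, h1]
    refine riccati_aux t₁ t₂ _ _ _ (fun s => y' 1 s - y' 0 s) (haC 0) (hgC 1) hw ?_
    intro x hx
    have e0 := hderivs 0 x hx
    have e1 := hderivs 1 x hx
    have hp0 := hpne 0 x hx
    have hp1 := hpne 1 x hx
    simp only [e0, e1]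
    field_simp
    ring
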